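/- For every natural number d there exists a natural number N such that for all natural numbers n ≥ N, the degree over ℚ of the subfield of ℂ generated over ℚ by i·cos(π/n) is at least d. -/

import Mathlib

open Complex Polynomial IntermediateField

open Nat in
lemma tot_unbounded (d : ℕ) : ∃ N : ℕ, ∀ n : ℕ, N ≤ n → d ≤ n.totient := by
  use (d+2)^((d+2)*(d+2)) + 1
  intro n hn
  by_contra hlt
  push_neg at hlt
  have hn0 : n ≠ 0 := by omega
  have hφ : 0 < n.totient := Nat.totient_pos.2 (Nat.pos_of_ne_zero hn0)
  -- each prime power factor is small
  have key : ∀ p ∈ n.primeFactors, p ^ n.factorization p ≤ (d+2)^(d+2) := by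
    intro p hp
    have hpp : p.Prime := Nat.prime_of_mem_primeFactors hp
    have hdvd : p ^ n.factorization p ∣ n := Nat.ordProj_dvd n p
    have h1 : (p ^ n.factorization p).totient ∣ n.totient :=
      Nat.totient_dvd_of_dvd hdvd
    have h2 : (p ^ n.factorization p).totient ≤ n.totient :=
      Nat.le_of_dvd hφ h1
    have hk : 0 < n.factorization p := Nat.Prime.factorization_pos_of_dvd hpp hn0 (Nat.dvd_of_mem_primeFactors hp)
    have h3 : p ^ (n.factorization p - 1) * (p - 1) ≤ n.totient := by
      rwa [Nat.totient_prime_pow hpp hk] at h2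
    have hple : p ≤ d + 1 := by
      have : p - 1 ≤ n.totient := le_trans (Nat.le_mul_of_pos_left _ (pow_pos hpp.pos _)) h3
      omega
    have hkle : n.factorization p ≤ d + 2 := by
      have h4 : 2 ^ (n.factorization p - 1) ≤ n.totient := by
        calc 2 ^ (n.factorization p - 1) ≤ p ^ (n.factorization p - 1) :=
              Nat.pow_le_pow_left hpp.two_le _
          _ ≤ p ^ (n.factorization p - 1) * (p - 1) := Nat.le_mul_of_pos_right _ (by have := hpp.two_le; omega)
          _ ≤ n.totient := h3
      have := @Nat.lt_two_pow_self (n.factorization p - 1)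
      omega
    calc p ^ n.factorization p ≤ (d+2) ^ n.factorization p := Nat.pow_le_pow_left (by omega) _
      _ ≤ (d+2)^(d+2) := Nat.pow_le_pow_right (by omega) hkle
  have hcard : n.primeFactors.card ≤ d + 2 := by
    have hsub : n.primeFactors ⊆ Finset.range (d+2) := by
      intro p hp
      have hpp : p.Prime := Nat.prime_of_mem_primeFactors hp
      have h1 : (p).totient ∣ n.totient := Nat.totient_dvd_of_dvd (Nat.dvd_of_mem_primeFactors hp)
      have h2 : p - 1 ≤ n.totient := by
        have := Nat.le_of_dvd hφ h1
        rwa [Nat.totient_prime hpp] at this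
      simp only [Finset.mem_range]; omega
    simpa using Finset.card_le_card hsub
  have hfac := Nat.factorization_prod_pow_eq_self hn0
  have hb : n ≤ ((d+2)^(d+2)) ^ n.primeFactors.card := by
    conv_lhs => rw [← hfac]
    rw [Finsupp.prod, Nat.support_factorization]
    exact Finset.prod_le_pow_card _ _ _ key
  have hb2 : n ≤ ((d+2)^(d+2)) ^ (d+2) := by
    refine hb.trans (Nat.pow_le_pow_right (by positivity) hcard)
  rw [← pow_mul] at hb2
  omega


lemma gen_integral (n : ℕ) (hn : 2 ≤ n) :
    IsIntegral ℚ (Complex.I * (Real.cos (Real.pi / n) : ℂ)) := by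
  have h2n : (2 * n : ℕ) ≠ 0 := by omega
  have hω := Complex.isPrimitiveRoot_exp (2 * n) h2n
  set ω : ℂ := Complex.exp (2 * (Real.pi : ℂ) * Complex.I / ((2 * n : ℕ) : ℂ)) with hωdef
  have hωint : IsIntegral ℚ ω := (hω.isIntegral (by omega)).tower_top
  have hIint : IsIntegral ℚ Complex.I := by
    refine ⟨X ^ 2 + 1, monic_X_pow_add_C _ (by norm_num), by simp⟩
  have hcos : (Real.cos (Real.pi / n) : ℂ) = (ω + ω ^ (2 * n - 1)) * (algebraMap ℚ ℂ (1/2)) := by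
    have hω0 : ω ≠ 0 := Complex.exp_ne_zero _
    have hωpow : ω ^ (2 * n - 1) = ω⁻¹ := by
      have h2 : ω ^ (2 * n - 1) * ω = 1 := by
        rw [← pow_succ]
        have : 2 * n - 1 + 1 = 2 * n := by omega
        rw [this]
        exact hω.pow_eq_one
      exact eq_inv_of_mul_eq_one_left h2
    have hθ : 2 * (Real.pi : ℂ) * Complex.I / ((2 * n : ℕ) : ℂ) = ((Real.pi / n : ℝ) : ℂ) * Complex.I := by
      have hne : (n : ℂ) ≠ 0 := by exact_mod_cast (by omega : n ≠ 0)
      push_cast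
      field_simp
    rw [hωpow, hωdef, hθ, ← Complex.exp_neg, ← neg_mul, Complex.exp_mul_I, Complex.exp_mul_I]
    simp only [Complex.ofReal_neg, Real.cos_neg, Real.sin_neg, Complex.ofReal_cos,
      Complex.ofReal_sin, map_one, map_ofNat, Complex.cos_neg, Complex.sin_neg]
    have : algebraMap ℚ ℂ (1/2) = (1/2 : ℂ) := by norm_num
    rw [this]
    ring
  rw [hcos]
  exact hIint.mul ((hωint.add (hωint.pow _)).mul isIntegral_algebraMap)


/-- The invariant trace field `K n`: the subfield of `ℂ` generated over `ℚ`
by `i * cos (π / n)`. -/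
noncomputable def pretzelTraceField (n : ℕ) : IntermediateField ℚ ℂ :=
  IntermediateField.adjoin ℚ {Complex.I * (Real.cos (Real.pi / n) : ℂ)}


set_option maxHeartbeats 1000000 in
lemma key_bound (n : ℕ) (hn : 2 ≤ n) :
    n.totient ≤ 2 * Module.finrank ℚ (pretzelTraceField n) := by
  have hn0 : (n : ℕ) ≠ 0 := by omega
  set K := pretzelTraceField n with hK
  -- the generator
  set x : ℂ := Complex.I * (Real.cos (Real.pi / n) : ℂ) with hxdef
  have hxK : x ∈ K := IntermediateField.subset_adjoin ℚ _ rfl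
  -- c = cos(2π/n) lies in K
  set c : ℂ := ((Real.cos (2 * Real.pi / n) : ℝ) : ℂ) with hcdef
  have hceq : c = -(2 * x ^ 2) - 1 := by
    have h2θ : (2 * Real.pi / n : ℝ) = 2 * (Real.pi / n) := by ring
    rw [hcdef, h2θ, Real.cos_two_mul, hxdef]
    push_cast
    linear_combination (2 * Complex.cos ((Real.pi : ℂ) / n) ^ 2) * Complex.I_sq
  have hcK : c ∈ K := by
    rw [hceq]
    exact sub_mem (neg_mem (mul_mem (ofNat_mem K 2) (pow_mem hxK 2))) (one_mem K)
  -- the primitive n-th root of unity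
  have hζprim := Complex.isPrimitiveRoot_exp n hn0
  set ζ : ℂ := Complex.exp (2 * (Real.pi : ℂ) * Complex.I / (n : ℂ)) with hζdef
  -- quadratic relation ζ² - 2cζ + 1 = 0
  have hθ : 2 * (Real.pi : ℂ) * Complex.I / (n : ℂ) = ((2 * Real.pi / n : ℝ) : ℂ) * Complex.I := by
    have hne : (n : ℂ) ≠ 0 := by exact_mod_cast hn0
    push_cast
    field_simp
  have hζeq : ζ = ((Real.cos (2 * Real.pi / n) : ℝ) : ℂ) + ((Real.sin (2 * Real.pi / n) : ℝ) : ℂ) * Complex.I := by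
    rw [hζdef, hθ, Complex.exp_mul_I]
    simp [Complex.ofReal_cos, Complex.ofReal_sin]
  have hrel : ζ ^ 2 - 2 * c * ζ + 1 = 0 := by
    rw [hζeq, hcdef]
    have hsc : ((Real.sin (2 * Real.pi / n) : ℝ) : ℂ) ^ 2 + ((Real.cos (2 * Real.pi / n) : ℝ) : ℂ) ^ 2 = 1 := by
      norm_cast
      exact_mod_cast Real.sin_sq_add_cos_sq _
    linear_combination ((Real.sin (2 * Real.pi / n) : ℝ) : ℂ) ^ 2 * Complex.I_sq - hsc
  -- ζ is integral of degree ≤ 2 over K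
  have hK2 : FiniteDimensional ℚ K := IntermediateField.adjoin.finiteDimensional (gen_integral n hn)
  set cK : K := ⟨c, hcK⟩ with hcKdef
  set p : Polynomial K := X ^ 2 - (C (2 * cK) * X - C 1) with hpdef
  have hlin : (C (2 * cK) * X - C 1).degree ≤ 1 := by
    rw [sub_eq_add_neg, ← C_neg]
    exact Polynomial.degree_linear_le
  have hpmonic : p.Monic := by
    refine Polynomial.monic_X_pow_sub (n := 2) (lt_of_le_of_lt hlin ?_)
    exact_mod_cast (by norm_num : (1:ℕ) < 2)
  have hpeval : Polynomial.aeval ζ p = 0 := by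
    rw [hpdef]
    simp only [map_sub, map_mul, map_pow, aeval_X, aeval_C, map_one, map_ofNat]
    have : (algebraMap K ℂ) cK = c := rfl
    rw [map_mul] at *
    simp [this]
    linear_combination hrel
  have hζKint : IsIntegral K ζ := ⟨p, hpmonic, hpeval⟩
  have hLfd : FiniteDimensional K K⟮ζ⟯ := IntermediateField.adjoin.finiteDimensional hζKint
  have hdeg2 : Module.finrank K K⟮ζ⟯ ≤ 2 := by
    rw [IntermediateField.adjoin.finrank hζKint]
    have h1 : (minpoly K ζ).degree ≤ p.degree := minpoly.degree_le_of_ne_zero K ζ hpmonic.ne_zero hpeval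
    have h2 : p.degree ≤ 2 := by
      rw [hpdef]
      refine (degree_sub_le _ _).trans (max_le ?_ ?_)
      · simpa using degree_X_pow_le (R := K) 2
      · exact hlin.trans (by norm_num)
    exact Polynomial.natDegree_le_iff_degree_le.2 (h1.trans h2)
  -- ℚ(ζ) has degree φ(n)
  have hζℚint : IsIntegral ℚ ζ := (hζprim.isIntegral (by omega)).tower_top
  have hQζ : Module.finrank ℚ ℚ⟮ζ⟯ = n.totient := by
    rw [IntermediateField.adjoin.finrank hζℚint, ← Polynomial.cyclotomic_eq_minpoly_rat hζprim (by omega),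
      Polynomial.natDegree_cyclotomic]
  -- tower
  have hEfd : FiniteDimensional ℚ K⟮ζ⟯ := FiniteDimensional.trans ℚ K K⟮ζ⟯
  have hle : ℚ⟮ζ⟯ ≤ (IntermediateField.restrictScalars ℚ (K⟮ζ⟯ : IntermediateField K ℂ)) := by
    rw [IntermediateField.adjoin_le_iff]
    intro y hy
    rw [Set.mem_singleton_iff.1 hy]
    exact IntermediateField.subset_adjoin K _ rfl
  have hmono : Module.finrank ℚ ℚ⟮ζ⟯ ≤ Module.finrank ℚ K⟮ζ⟯ := by
    haveI : FiniteDimensional ℚ (IntermediateField.restrictScalars ℚ (K⟮ζ⟯ : IntermediateField K ℂ)) := hEfd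
    have h := LinearMap.finrank_le_finrank_of_injective
      (f := ((IntermediateField.inclusion hle).toLinearMap :
        ℚ⟮ζ⟯ →ₗ[ℚ] (IntermediateField.restrictScalars ℚ (K⟮ζ⟯ : IntermediateField K ℂ))))
      (IntermediateField.inclusion hle).injective
    exact h
  have htower : Module.finrank ℚ K * Module.finrank K K⟮ζ⟯ = Module.finrank ℚ K⟮ζ⟯ :=
    Module.finrank_mul_finrank ℚ K K⟮ζ⟯
  calc n.totient = Module.finrank ℚ ℚ⟮ζ⟯ := hQζ.symm
    _ ≤ Module.finrank ℚ K⟮ζ⟯ := hmono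
    _ = Module.finrank ℚ K * Module.finrank K K⟮ζ⟯ := htower.symm
    _ ≤ Module.finrank ℚ K * 2 := Nat.mul_le_mul_left _ hdeg2
    _ = 2 * Module.finrank ℚ K := by ring

theorem finrank_pretzelTraceField_unbounded (d : ℕ) :
    ∃ N : ℕ, ∀ n : ℕ, N ≤ n →
      d ≤ Module.finrank ℚ (pretzelTraceField n) := by
  obtain ⟨N₀, hN₀⟩ := tot_unbounded (2 * d)
  refine ⟨max N₀ 2, fun n hn => ?_⟩
  have h2 : 2 ≤ n := le_trans (le_max_right _ _) hn
  have hφ : 2 * d ≤ n.totient := hN₀ n (le_trans (le_max_left _ _) hn)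
  have := key_bound n h2
  omega
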